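/- In the firefighter game on a finite graph G with fire starting at vertex r, the game terminates after at most L_r(G) turns, where L_r(G) is the maximum length of an induced path in G with extremity r. Specifically, if for some vertex v the burning amount strictly increases at turn i, i.e. b_i(v) > b_{i−1}(v), then there exists an induced path (r = u_0, u_1, …, u_i = v) of length i in G along which the burning amounts b_j(u_j) are non-increasing. -/

import Mathlib

theorem stmt_13 (V : Type*) [Fintype V] [DecidableEq V]
    (G : SimpleGraph V) [DecidableRel G.Adj]
    (r : V) (L : ℕ) (b pc : ℕ → V → NNReal)
    (hL : ∀ (n : ℕ) (u : ℕ → V), u 0 = r →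
      (∀ j < n, G.Adj (u j) (u (j + 1))) →
      Set.InjOn u (Set.Iic n) →
      (∀ j k, k ≤ n → j + 1 < k → ¬ G.Adj (u j) (u k)) → n ≤ L)
    (hb0r : b 0 r = 1) (hb0 : ∀ v, v ≠ r → b 0 v = 0)
    (hpc0 : ∀ v, pc 0 v = 0)
    (hpcmono : ∀ i v, pc i v ≤ pc (i + 1) v)
    (hbound : ∀ i v, b i v + pc i v ≤ 1)
    (hspread : ∀ i, 1 ≤ i → ∀ v,
      b i v = max ((G.neighborFinset v).sup (fun v' => b (i - 1) v') - pc i v)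
        (b (i - 1) v)) :
    (∀ i, 1 ≤ i → ∀ v, b (i - 1) v < b i v →
      ∃ u : ℕ → V, u 0 = r ∧ u i = v ∧
        (∀ j < i, G.Adj (u j) (u (j + 1))) ∧
        Set.InjOn u (Set.Iic i) ∧
        (∀ j k, k ≤ i → j + 1 < k → ¬ G.Adj (u j) (u k)) ∧
        (∀ j < i, b (j + 1) (u (j + 1)) ≤ b j (u j))) ∧
    (∀ i, L < i → ∀ v, b i v = b (i - 1) v) := by
  have hble : ∀ i v, b i v ≤ b (i + 1) v := by
    intro i v
    conv_lhs => rw [show b i v = b (i + 1 - 1) v by norm_num]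
    rw [hspread (i + 1) (by omega) v]
    exact le_max_right _ _
  have hbmono : ∀ v, Monotone (fun i => b i v) :=
    fun v => monotone_nat_of_le_succ (fun i => hble i v)
  have hpcm : ∀ v, Monotone (fun i => pc i v) :=
    fun v => monotone_nat_of_le_succ (fun i => hpcmono i v)
  have hb1 : ∀ i v, b i v ≤ 1 :=
    fun i v => le_trans (self_le_add_right _ _) (hbound i v)
  have chain : ∀ (u : ℕ → V) (n : ℕ),
      (∀ j < n, b (j + 1) (u (j + 1)) ≤ b j (u j)) →
      ∀ j ≤ n, b n (u n) ≤ b j (u j) := by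
    intro u n hdec
    induction n with
    | zero => intro j hj; interval_cases j; exact le_rfl
    | succ n ih =>
      intro j hj
      rcases Nat.eq_or_lt_of_le hj with h | h
      · rw [h]
      · exact le_trans (hdec n (by omega))
          (ih (fun k hk => hdec k (by omega)) j (by omega))
  have key : ∀ i, 1 ≤ i → ∀ v, b (i - 1) v < b i v →
      ∃ u : ℕ → V, u 0 = r ∧ u i = v ∧
        (∀ j < i, G.Adj (u j) (u (j + 1))) ∧
        Set.InjOn u (Set.Iic i) ∧
        (∀ j k, k ≤ i → j + 1 < k → ¬ G.Adj (u j) (u k)) ∧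
        (∀ j < i, b (j + 1) (u (j + 1)) ≤ b j (u j)) := by
    intro i hi
    induction i, hi using Nat.le_induction with
    | base =>
      intro v hv
      norm_num at hv
      have hvr : v ≠ r := by
        intro h
        rw [h, hb0r] at hv
        exact absurd hv (not_lt.2 (hb1 1 r))
      have hv0 : b 0 v = 0 := hb0 v hvr
      have hpos : (0 : NNReal) < b 1 v := hv0 ▸ hv
      have hsp := hspread 1 le_rfl v
      norm_num at hsp
      have hS : (0 : NNReal) < (G.neighborFinset v).sup (fun v' => b 0 v') := by
        rcases le_or_gt (b 1 v) (b 0 v) with h | _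
        · exact absurd hv (not_lt.2 h)
        · calc (0 : NNReal) < b 1 v := hpos
            _ ≤ (G.neighborFinset v).sup (fun v' => b 0 v') := by
              rw [hsp]
              exact max_le (tsub_le_self)
                (by rw [hv0]; exact zero_le)
      obtain ⟨w, hwmem, hw0⟩ := Finset.lt_sup_iff.mp hS
      have hwr : w = r := by
        by_contra h
        rw [hb0 w h] at hw0
        exact lt_irrefl _ hw0
      have hadj : G.Adj v r := hwr ▸ (SimpleGraph.mem_neighborFinset _ _ _).mp hwmem
      refine ⟨fun j => if j = 0 then r else v, by simp, by simp, ?_, ?_, ?_, ?_⟩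
      · intro j hj
        interval_cases j
        simp only [if_pos rfl, if_neg one_ne_zero]
        exact hadj.symm
      · intro a ha b' hb' hab
        simp only [Set.mem_Iic] at ha hb'
        interval_cases a <;> interval_cases b'
        · rfl
        · simp only [if_pos rfl, if_neg one_ne_zero] at hab
          exact absurd hab.symm hvr
        · simp only [if_pos rfl, if_neg one_ne_zero] at hab
          exact absurd hab hvr
        · rfl
      · intro j k hk hjk; omega
      · intro j hj
        interval_cases j
        simpa [hb0r] using hb1 1 v
    | succ n hn ih =>
      intro v hv
      norm_num at hv
      have hsp := hspread (n + 1) (by omega) v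
      norm_num at hsp
      set S := (G.neighborFinset v).sup (fun v' => b n v') with hSdef
      have heq : b (n + 1) v = S - pc (n + 1) v := by
        rcases le_or_gt (S - pc (n + 1) v) (b n v) with h | h
        · rw [hsp, max_eq_right h] at hv
          exact absurd hv (lt_irrefl _)
        · rw [hsp, max_eq_left h.le]
      have h1 : b n v < S :=
        lt_of_lt_of_le (heq ▸ hv) tsub_le_self
      have hne : (G.neighborFinset v).Nonempty := by
        obtain ⟨w, hw, _⟩ := Finset.lt_sup_iff.mp h1
        exact ⟨w, hw⟩
      obtain ⟨w, hwmem, hSw⟩ := Finset.exists_mem_eq_sup _ hne (fun v' => b n v')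
      have hadj : G.Adj v w := (SimpleGraph.mem_neighborFinset _ _ _).mp hwmem
      have hwlt : b (n - 1) w < b n w := by
        by_contra h
        push_neg at h
        have h2 : b (n - 1) w - pc n v ≤ b n v := by
          rw [hspread n hn v]
          exact le_max_of_le_left (tsub_le_tsub_right (Finset.le_sup hwmem) _)
        have h3 : b (n + 1) v ≤ b n v := by
          rw [heq, hSdef, hSw]
          calc b n w - pc (n + 1) v ≤ b (n - 1) w - pc n v :=
                tsub_le_tsub h (hpcmono n v)
            _ ≤ b n v := h2
        exact absurd hv (not_lt.2 h3)
      obtain ⟨u, hu0, hun, huadj, huinj, huind, hudec⟩ := ih w hwlt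
      have hvle : b (n + 1) v ≤ b n w := by
        rw [heq, hSdef, hSw]; exact tsub_le_self
      have hchain : ∀ j ≤ n, b n w ≤ b j (u j) := by
        intro j hj
        have := chain u n hudec j hj
        rwa [hun] at this
      have hvne : ∀ j ≤ n, u j ≠ v := by
        intro j hj h
        have h1' : b (n + 1) v ≤ b j (u j) := le_trans hvle (hchain j hj)
        rw [h] at h1'
        have h2' : b j v ≤ b n v := hbmono v hj
        exact absurd (lt_of_lt_of_le hv (le_trans h1' h2')) (lt_irrefl _)
      have hnoadj : ∀ j, j + 1 < n + 1 → ¬ G.Adj (u j) v := by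
        intro j hj hA
        have hm : u j ∈ G.neighborFinset v := by
          rw [SimpleGraph.mem_neighborFinset]; exact hA.symm
        have h2 : b j (u j) - pc (j + 1) v ≤ b (j + 1) v := by
          rw [hspread (j + 1) (by omega) v]
          refine le_max_of_le_left ?_
          simp only [Nat.add_sub_cancel]
          exact tsub_le_tsub_right (Finset.le_sup hm) _
        have h3 : b (j + 1) v ≤ b n v := hbmono v (by omega)
        have h4 : b (n + 1) v ≤ b j (u j) - pc (j + 1) v := by
          rw [heq, hSdef, hSw]
          exact tsub_le_tsub (hchain j (by omega)) (hpcm v (by omega : j + 1 ≤ n + 1))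
        exact absurd hv (not_lt.2 (le_trans h4 (le_trans h2 h3)))
      refine ⟨fun j => if j = n + 1 then v else u j, ?_, ?_, ?_, ?_, ?_, ?_⟩
      · simp [hu0]
      · simp
      · intro j hj
        by_cases h : j = n
        · simp only [if_neg (show j ≠ n + 1 by omega), if_pos (show j + 1 = n + 1 by omega)]
          rw [h, hun]
          exact hadj.symm
        · simp only [if_neg (show j ≠ n + 1 by omega), if_neg (show j + 1 ≠ n + 1 by omega)]
          exact huadj j (by omega)
      · intro a ha b' hb' hab
        simp only [Set.mem_Iic] at ha hb'
        by_cases h1' : a = n + 1 <;> by_cases h2' : b' = n + 1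
        · omega
        · simp only [if_pos h1', if_neg h2'] at hab
          exact absurd hab.symm (hvne b' (by omega))
        · simp only [if_neg h1', if_pos h2'] at hab
          exact absurd hab (hvne a (by omega))
        · simp only [if_neg h1', if_neg h2'] at hab
          exact huinj (Set.mem_Iic.2 (by omega)) (Set.mem_Iic.2 (by omega)) hab
      · intro j k hk hjk
        by_cases h : k = n + 1
        · simp only [if_pos h, if_neg (show j ≠ n + 1 by omega)]
          exact hnoadj j (by omega)
        · simp only [if_neg (show j ≠ n + 1 by omega), if_neg h]
          exact huind j k (by omega) hjk
      · intro j hj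
        by_cases h : j = n
        · simp only [if_pos (show j + 1 = n + 1 by omega), if_neg (show j ≠ n + 1 by omega)]
          rw [h, hun]
          exact hvle
        · simp only [if_neg (show j ≠ n + 1 by omega), if_neg (show j + 1 ≠ n + 1 by omega)]
          exact hudec j (by omega)
  refine ⟨key, ?_⟩
  intro i hLi v
  have hi1 : 1 ≤ i := by omega
  have hle : b (i - 1) v ≤ b i v := by
    conv_rhs => rw [hspread i hi1 v]
    exact le_max_right _ _
  rcases eq_or_lt_of_le hle with h | h
  · exact h.symm
  · obtain ⟨u, hu0, _, hadj, hinj, hind, _⟩ := key i hi1 v h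
    exact absurd (hL i u hu0 hadj hinj hind) (by omega)
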